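/- There is a universal constant C such that for all integers d ≥ 1 and k ≥ 1 and every probability vector p on [d]^k, the Gaussian mean width of P^{1/2}L0 satisfies ℓ*(P^{1/2}L0) = E_g sup_{h ∈ L0} ⟨g, P^{1/2}h⟩ ≤ C · d^{⌈k/2⌉/2}, where g ∈ ℝ^{[d]^k} has i.i.d. standard normal N(0,1) coordinates. -/

import Mathlib

open Finset MeasureTheory ProbabilityTheory

/-- First `⌊k/2⌋` coordinates of a `k`-tuple from `[d]`. -/
def tupHead {d k : ℕ} (f : Fin k → Fin d) : Fin (k / 2) → Fin d :=
  fun i => f (Fin.castLE (Nat.div_le_self k 2) i)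

/-- Last `⌈k/2⌉ = k − ⌊k/2⌋` coordinates of a `k`-tuple from `[d]`. -/
def tupTail {d k : ℕ} (f : Fin k → Fin d) : Fin (k - k / 2) → Fin d :=
  fun i => f ⟨k / 2 + i.val, by have := i.isLt; omega⟩

/-- `L0 = conv{w ⊗ z : w ∈ {−1,1}^{[d]^{⌊k/2⌋}}, z ∈ {−1,1}^{[d]^{⌈k/2⌉}}}`. -/
noncomputable def L0set (d k : ℕ) : Set ((Fin k → Fin d) → ℝ) :=
  convexHull ℝ
    {x | ∃ w : (Fin (k / 2) → Fin d) → ℝ, ∃ z : (Fin (k - k / 2) → Fin d) → ℝ,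
      (∀ s, w s = 1 ∨ w s = -1) ∧ (∀ t, z t = 1 ∨ z t = -1) ∧
      x = fun f => w (tupHead f) * z (tupTail f)}



section helpers
open MeasureTheory.Measure Real
open scoped ENNReal NNReal

lemma gauss_pdf_rw (t : ℝ) : (fun x => Real.exp (t * x) * gaussianPDFReal 0 1 x)
    = fun x => Real.exp (t^2/2) * ((Real.sqrt (2*π))⁻¹ * Real.exp (-(2⁻¹) * (x - t)^2)) := by
  funext x
  simp only [gaussianPDFReal_def, NNReal.coe_one, mul_one, sub_zero]
  rw [show rexp (t*x) * ((√(2*π))⁻¹ * rexp (-x^2/2)) = (√(2*π))⁻¹ * (rexp (t*x) * rexp (-x^2/2)) by ring,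
    ← Real.exp_add,
    show rexp (t^2/2) * ((√(2*π))⁻¹ * rexp (-(2⁻¹)*(x-t)^2)) = (√(2*π))⁻¹ * rexp (t^2/2 + -(2⁻¹)*(x-t)^2) from by rw [Real.exp_add]; ring]
  congr 1
  ring

lemma integrable_exp_mul_gauss (t : ℝ) :
    Integrable (fun x => Real.exp (t * x)) (gaussianReal 0 1) := by
  rw [gaussianReal_of_var_ne_zero _ one_ne_zero, gaussianPDF_def]
  rw [integrable_withDensity_iff ((measurable_gaussianPDFReal 0 1).ennreal_ofReal)
    (Filter.Eventually.of_forall fun x => ENNReal.ofReal_lt_top)]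
  simp only [ENNReal.toReal_ofReal (gaussianPDFReal_nonneg _ _ _)]
  rw [gauss_pdf_rw]
  exact (((integrable_exp_neg_mul_sq (by norm_num : (0:ℝ) < 2⁻¹)).comp_sub_right t).const_mul _).const_mul _

lemma integral_exp_mul_gauss (t : ℝ) :
    ∫ x, Real.exp (t * x) ∂(gaussianReal 0 1) = Real.exp (t^2/2) := by
  rw [gaussianReal_of_var_ne_zero _ one_ne_zero, gaussianPDF_def]
  rw [show (fun x => ENNReal.ofReal (gaussianPDFReal 0 1 x)) = (fun x => ((gaussianPDFReal 0 1 x).toNNReal : ℝ≥0∞)) from rfl]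
  rw [integral_withDensity_eq_integral_smul ((measurable_gaussianPDFReal 0 1).real_toNNReal)]
  simp only [NNReal.smul_def, smul_eq_mul, Real.coe_toNNReal _ (gaussianPDFReal_nonneg _ _ _)]
  have : (fun x => gaussianPDFReal 0 1 x * Real.exp (t * x)) = fun x => Real.exp (t^2/2) * ((Real.sqrt (2*π))⁻¹ * Real.exp (-(2⁻¹) * (x - t)^2)) := by
    funext x
    have := congrFun (gauss_pdf_rw t) x
    rw [mul_comm] at this
    exact this
  rw [this, integral_const_mul, integral_const_mul]
  rw [integral_sub_right_eq_self (fun a => Real.exp (-(2⁻¹) * a^2)) t]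
  rw [integral_gaussian]
  rw [show π / 2⁻¹ = 2 * π by ring]
  rw [inv_mul_cancel₀ (by positivity), mul_one]

variable {μ : Measure ℝ} [IsProbabilityMeasure μ]



theorem myint_fin {n : ℕ} {f : Fin n → ℝ → ℝ} (hf : ∀ i, Integrable (f i) μ) :
    Integrable (fun x : Fin n → ℝ => ∏ i, f i (x i)) (Measure.pi fun _ => μ) := by
  induction n with
  | zero =>
      simp only [Finset.univ_eq_empty, Finset.prod_empty]
      rw [integrable_const_iff]
      simp [pi_empty_univ]
      infer_instance
  | succ n n_ih =>
      have h := ((measurePreserving_piFinSuccAbove (fun _ : Fin (n+1) => μ) 0).symm)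
      rw [← h.integrable_comp_emb (MeasurableEquiv.measurableEmbedding _)]
      have heq : ((fun x : Fin (n+1) → ℝ => ∏ i, f i (x i)) ∘
          (MeasurableEquiv.piFinSuccAbove (fun _ => ℝ) 0).symm)
          = fun x : ℝ × (Fin n → ℝ) => f 0 x.1 * ∏ i : Fin n, f (Fin.succ i) (x.2 i) := by
        funext x
        rw [Function.comp_apply, Fin.prod_univ_succ]
        simp [MeasurableEquiv.piFinSuccAbove, Fin.insertNthEquiv]
      rw [heq]
      exact Integrable.mul_prod (hf 0) (n_ih (fun i => hf _))

theorem myintegral_fin {n : ℕ} (f : Fin n → ℝ → ℝ) :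
    ∫ x : Fin n → ℝ, ∏ i, f i (x i) ∂(Measure.pi fun _ => μ) = ∏ i, ∫ x, f i x ∂μ := by
  induction n with
  | zero => simp [measure_univ]
  | succ n n_ih =>
      calc
        _ = ∫ x : ℝ × (Fin n → ℝ),
            f 0 x.1 * ∏ i : Fin n, f (Fin.succ i) (x.2 i) ∂(μ.prod (Measure.pi fun _ => μ)) := by
          rw [← ((measurePreserving_piFinSuccAbove
            (fun _ : Fin (n+1) => μ) 0).symm).integral_comp']
          congr 1
          funext x
          rw [Fin.prod_univ_succ]
          simp [MeasurableEquiv.piFinSuccAbove, Fin.insertNthEquiv]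
        _ = (∫ x, f 0 x ∂μ) * ∏ i : Fin n, ∫ x : ℝ, f (Fin.succ i) x ∂μ := by
          rw [← n_ih fun i => f (Fin.succ i), ← integral_prod_mul]
        _ = ∏ i, ∫ x, f i x ∂μ := by rw [Fin.prod_univ_succ]

theorem myint_pi {ι : Type*} [Fintype ι] {f : ι → ℝ → ℝ} (hf : ∀ i, Integrable (f i) μ) :
    Integrable (fun x : ι → ℝ => ∏ i, f i (x i)) (Measure.pi fun _ => μ) := by
  let e := (Fintype.equivFin ι).symm
  have h := measurePreserving_piCongrLeft (fun _ : ι => μ) e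
  rw [← h.integrable_comp_emb (MeasurableEquiv.measurableEmbedding _)]
  have heq : ((fun x : ι → ℝ => ∏ i, f i (x i)) ∘ (MeasurableEquiv.piCongrLeft (fun _ => ℝ) e))
      = fun x : Fin (Fintype.card ι) → ℝ => ∏ j, f (e j) (x j) := by
    funext x
    rw [Function.comp_apply, ← e.prod_comp]
    simp [MeasurableEquiv.coe_piCongrLeft, Equiv.piCongrLeft_apply_apply]
  rw [heq]
  exact myint_fin (fun i => hf _)

theorem myintegral_pi {ι : Type*} [Fintype ι] (f : ι → ℝ → ℝ) :
    ∫ x : ι → ℝ, ∏ i, f i (x i) ∂(Measure.pi fun _ => μ) = ∏ i, ∫ x, f i x ∂μ := by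
  let e := (Fintype.equivFin ι).symm
  rw [← (measurePreserving_piCongrLeft (fun _ : ι => μ) e).integral_comp']
  have heq : (fun x : Fin (Fintype.card ι) → ℝ =>
      ∏ i, f i ((MeasurableEquiv.piCongrLeft (fun _ => ℝ) e) x i))
      = fun x : Fin (Fintype.card ι) → ℝ => ∏ j, f (e j) (x j) := by
    funext x
    rw [← e.prod_comp]
    simp [MeasurableEquiv.coe_piCongrLeft, Equiv.piCongrLeft_apply_apply]
  rw [show (∫ x : Fin (Fintype.card ι) → ℝ,
      ∏ i, f i ((MeasurableEquiv.piCongrLeft (fun _ => ℝ) e) x i) ∂(Measure.pi fun _ => μ))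
      = ∫ x : Fin (Fintype.card ι) → ℝ, ∏ j, f (e j) (x j) ∂(Measure.pi fun _ => μ) from by
    rw [heq]]
  rw [myintegral_fin, ← e.prod_comp]

noncomputable abbrev gpi (ι : Type*) [Fintype ι] : Measure (ι → ℝ) :=
  Measure.pi fun _ : ι => gaussianReal 0 1

lemma exp_lin_eq {ι : Type*} [Fintype ι] (c : ι → ℝ) (g : ι → ℝ) :
    Real.exp (∑ f, c f * g f) = ∏ f, Real.exp (c f * g f) := Real.exp_sum _ _

lemma integrable_exp_lin {ι : Type*} [Fintype ι] (c : ι → ℝ) :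
    Integrable (fun g : ι → ℝ => Real.exp (∑ f, c f * g f)) (gpi ι) := by
  simp_rw [exp_lin_eq]
  exact myint_pi (fun f => integrable_exp_mul_gauss (c f))

lemma integral_exp_lin {ι : Type*} [Fintype ι] (c : ι → ℝ) :
    ∫ g : ι → ℝ, Real.exp (∑ f, c f * g f) ∂(gpi ι) = Real.exp (∑ f, (c f)^2 / 2) := by
  simp_rw [exp_lin_eq]
  rw [myintegral_pi (fun f x => Real.exp (c f * x))]
  rw [Real.exp_sum]
  exact Finset.prod_congr rfl fun f _ => integral_exp_mul_gauss (c f)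

lemma measurable_lin {ι : Type*} [Fintype ι] (c : ι → ℝ) :
    Measurable (fun g : ι → ℝ => ∑ f, c f * g f) := by
  exact Finset.measurable_sum _ fun f _ => (measurable_pi_apply f).const_mul _

lemma integrable_lin {ι : Type*} [Fintype ι] (c : ι → ℝ) :
    Integrable (fun g : ι → ℝ => ∑ f, c f * g f) (gpi ι) := by
  refine Integrable.mono' ((integrable_exp_lin c).add (integrable_exp_lin (fun f => -(c f))))
    (measurable_lin c).aestronglyMeasurable (Filter.Eventually.of_forall fun g => ?_)
  have h1 : ∀ y : ℝ, |y| ≤ Real.exp y + Real.exp (-y) := by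
    intro y
    rcases abs_cases y with ⟨h, _⟩ | ⟨h, _⟩ <;> rw [h]
    · nlinarith [Real.add_one_le_exp y, Real.exp_pos (-y)]
    · nlinarith [Real.add_one_le_exp (-y), Real.exp_pos y]
  have h2 : (∑ f, -c f * g f) = -(∑ f, c f * g f) := by
    rw [← Finset.sum_neg_distrib]
    exact Finset.sum_congr rfl fun f _ => by ring
  rw [Real.norm_eq_abs]
  calc |∑ f, c f * g f| ≤ Real.exp (∑ f, c f * g f) + Real.exp (-(∑ f, c f * g f)) := h1 _
    _ = _ := by rw [← h2]; rfl

lemma integrable_sup' {α : Type*} [MeasurableSpace α] {μ : Measure α} {ι : Type*}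
    (s : Finset ι) (hs : s.Nonempty) (f : ι → α → ℝ) (hf : ∀ i ∈ s, Integrable (f i) μ) :
    Integrable (fun a => s.sup' hs (fun i => f i a)) μ := by
  revert hf
  induction hs using Finset.Nonempty.cons_induction with
  | singleton i => intro hf; simpa using hf i (by simp)
  | cons i s hi hs ih =>
      intro hf
      have : (fun a => (Finset.cons i s hi).sup' (Finset.cons_nonempty hi) fun j => f j a)
          = fun a => (f i a) ⊔ (s.sup' hs fun j => f j a) := by
        funext a; rw [Finset.sup'_cons]
      rw [this]
      exact (hf i (by simp)).sup (ih fun j hj => hf j (Finset.mem_cons_of_mem hj))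




theorem emax_le {ι F : Type*} [Fintype ι] [Nonempty ι] [Fintype F] (c : ι → F → ℝ)
    (hc : ∀ i, ∑ f, (c i f)^2 = 1) (hN : 2 ≤ Fintype.card ι) :
    ∫ g : F → ℝ, Finset.univ.sup' Finset.univ_nonempty (fun i => ∑ f, c i f * g f) ∂(gpi F)
      ≤ Real.sqrt (2 * Real.log (Fintype.card ι)) := by
  set μ := gpi F with hμ
  have : IsProbabilityMeasure μ := by rw [hμ]; infer_instance
  set N : ℕ := Fintype.card ι with hNdef
  have hN1 : (2:ℝ) ≤ (N:ℝ) := by exact_mod_cast hN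
  have hL : 0 < Real.log N := Real.log_pos (by linarith)
  set L : ℝ := Real.log N with hLdef
  set lam : ℝ := Real.sqrt (2 * L) with hlam
  have hlampos : 0 < lam := Real.sqrt_pos.2 (by linarith)
  have hlamsq : lam ^ 2 = 2 * L := Real.sq_sqrt (by linarith)
  set X : ι → (F → ℝ) → ℝ := fun i g => ∑ f, c i f * g f with hX
  set M : (F → ℝ) → ℝ := fun g => Finset.univ.sup' Finset.univ_nonempty (fun i => X i g) with hM
  set Y : (F → ℝ) → ℝ := fun g => ∑ i, Real.exp (lam * X i g) with hY
  -- rewrite lam * X i g as a linear functional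
  have hlin : ∀ i, (fun g : F → ℝ => Real.exp (lam * X i g))
      = fun g => Real.exp (∑ f, (lam * c i f) * g f) := by
    intro i
    funext g
    congr 1
    rw [hX, Finset.mul_sum]
    exact Finset.sum_congr rfl fun f _ => by ring
  have intexp : ∀ i, Integrable (fun g => Real.exp (lam * X i g)) μ := by
    intro i; rw [hlin i]; exact integrable_exp_lin _
  have intexpval : ∀ i, ∫ g, Real.exp (lam * X i g) ∂μ = Real.exp (lam^2/2) := by
    intro i
    rw [hlin i, integral_exp_lin]
    congr 1
    have : ∀ f, (lam * c i f)^2/2 = lam^2/2 * (c i f)^2 := fun f => by ring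
    rw [Finset.sum_congr rfl fun f _ => this f, ← Finset.mul_sum, hc i, mul_one]
  have intX : ∀ i, Integrable (X i) μ := fun i => integrable_lin _
  have measX : ∀ i, Measurable (X i) := by
    intro i
    exact Finset.measurable_sum _ fun f _ => (measurable_pi_apply f).const_mul _
  have intM : Integrable M μ := integrable_sup' _ _ _ (fun i _ => intX i)
  have intY : Integrable Y μ := integrable_finset_sum _ (fun i _ => intexp i)
  have measY : Measurable Y :=
    Finset.measurable_sum _ fun i _ => Real.measurable_exp.comp ((measX i).const_mul _)
  have Ypos : ∀ g, 0 < Y g := by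
    intro g
    exact Finset.sum_pos (fun i _ => Real.exp_pos _) Finset.univ_nonempty
  have expleY : ∀ i g, Real.exp (lam * X i g) ≤ Y g := by
    intro i g
    show Real.exp (lam * X i g) ≤ ∑ j, Real.exp (lam * X j g)
    exact Finset.single_le_sum (f := fun j => Real.exp (lam * X j g)) (fun j _ => (Real.exp_pos _).le) (Finset.mem_univ i)
  -- pointwise bound
  have hpt : ∀ g, M g ≤ lam⁻¹ * Real.log (Y g) := by
    intro g
    obtain ⟨i0, -, hi0⟩ := Finset.exists_mem_eq_sup' Finset.univ_nonempty (fun i => X i g)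
    have h1 : lam * M g ≤ Real.log (Y g) := by
      have := Real.log_le_log (Real.exp_pos (lam * X i0 g)) (expleY i0 g)
      rwa [Real.log_exp, ← hi0] at this
    calc M g = lam⁻¹ * (lam * M g) := by field_simp
      _ ≤ lam⁻¹ * Real.log (Y g) := by
          exact mul_le_mul_of_nonneg_left h1 (by positivity)
  -- integrability of log Y
  have i0 : ι := Classical.arbitrary ι
  have hlogY_le : ∀ g, Real.log (Y g) ≤ Y g := fun g =>
    (Real.log_le_sub_one_of_pos (Ypos g)).trans (by linarith)
  have hlogY_ge : ∀ g, lam * X i0 g ≤ Real.log (Y g) := by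
    intro g
    have := Real.log_le_log (Real.exp_pos (lam * X i0 g)) (expleY i0 g)
    rwa [Real.log_exp] at this
  have intlogY : Integrable (fun g => Real.log (Y g)) μ := by
    refine Integrable.mono' (intY.add (((intX i0).abs).const_mul |lam|))
      (Real.measurable_log.comp measY).aestronglyMeasurable
      (Filter.Eventually.of_forall fun g => ?_)
    rw [Real.norm_eq_abs]
    rcases abs_cases (Real.log (Y g)) with ⟨h, _⟩ | ⟨h, _⟩ <;> rw [h]
    · have := hlogY_le g
      have h2 : 0 ≤ |lam| * |X i0 g| := by positivity
      simpa using by linarith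
    · have := hlogY_ge g
      have h2 : -(lam * X i0 g) ≤ |lam| * |X i0 g| := by
        calc -(lam * X i0 g) ≤ |lam * X i0 g| := neg_le_abs _
          _ = |lam| * |X i0 g| := abs_mul _ _
      have h3 : 0 < Y g := Ypos g
      simpa using by linarith
  -- integral of Y
  have AY : ∫ g, Y g ∂μ = N * Real.exp (lam^2/2) := by
    rw [hY]
    rw [integral_finset_sum _ (fun i _ => intexp i)]
    rw [Finset.sum_congr rfl (fun i _ => intexpval i)]
    simp [hNdef, mul_comm]
  set a : ℝ := N * Real.exp (lam^2/2) with ha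
  have hapos : 0 < a := by positivity
  -- Jensen via tangent line
  have hjensen : ∫ g, Real.log (Y g) ∂μ ≤ Real.log a := by
    have hpt2 : ∀ g, Real.log (Y g) ≤ (Real.log a - 1) + Y g * a⁻¹ := by
      intro g
      have h1 := Real.log_le_sub_one_of_pos (show 0 < Y g / a by positivity)
      rw [Real.log_div (Ypos g).ne' hapos.ne'] at h1
      have : Y g / a = Y g * a⁻¹ := div_eq_mul_inv _ _
      linarith [h1, this ▸ h1]
    have hint2 : Integrable (fun g => (Real.log a - 1) + Y g * a⁻¹) μ :=
      (integrable_const _).add (intY.mul_const _)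
    calc ∫ g, Real.log (Y g) ∂μ ≤ ∫ g, ((Real.log a - 1) + Y g * a⁻¹) ∂μ :=
          integral_mono intlogY hint2 hpt2
      _ = (Real.log a - 1) + (∫ g, Y g ∂μ) * a⁻¹ := by
          rw [integral_add (integrable_const _) (intY.mul_const _), integral_const,
            integral_mul_const]
          simp
      _ = Real.log a := by
          have hYa : (∫ g, Y g ∂μ) = a := AY
          rw [hYa, mul_inv_cancel₀ hapos.ne']
          ring
  -- combine
  have main : ∫ g, M g ∂μ ≤ lam⁻¹ * Real.log a := by
    calc ∫ g, M g ∂μ ≤ ∫ g, lam⁻¹ * Real.log (Y g) ∂μ :=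
          integral_mono intM (intlogY.const_mul _) hpt
      _ = lam⁻¹ * ∫ g, Real.log (Y g) ∂μ := integral_const_mul _ _
      _ ≤ lam⁻¹ * Real.log a := mul_le_mul_of_nonneg_left hjensen (by positivity)
  have hloga : Real.log a = L + lam^2/2 := by
    rw [ha, Real.log_mul (by positivity) (Real.exp_ne_zero _), Real.log_exp, hLdef]
  have : lam⁻¹ * Real.log a = lam := by
    rw [hloga, hlamsq]
    have : L + 2 * L / 2 = lam^2 := by rw [hlamsq]; ring
    rw [this]
    rw [pow_two, ← mul_assoc, inv_mul_cancel₀ hlampos.ne', one_mul]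
  calc ∫ g, M g ∂μ ≤ lam⁻¹ * Real.log a := main
    _ = lam := this
    _ = Real.sqrt (2 * Real.log N) := rfl

def sg (b : Bool) : ℝ := if b then 1 else -1

lemma sg_sq (b : Bool) : sg b ^ 2 = 1 := by cases b <;> norm_num [sg]

lemma sg_mem (b : Bool) : sg b = 1 ∨ sg b = -1 := by cases b <;> simp [sg]

lemma sg_of (x : ℝ) (hx : x = 1 ∨ x = -1) : sg (decide (x = 1)) = x := by
  rcases hx with h | h <;> subst h <;> norm_num [sg]


end helpers

/-- There is a universal constant `C` such that for all `d, k ≥ 1` and every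
probability vector `p` on `[d]^k`, the Gaussian mean width of `P^{1/2} L0` satisfies
`E_g sup_{h ∈ L0} ⟨g, P^{1/2} h⟩ ≤ C · d^{⌈k/2⌉/2}`, where `g` has i.i.d. `N(0,1)`
coordinates. -/
theorem stmt_5 : ∃ C : ℝ, 0 < C ∧
    ∀ (d k : ℕ), 1 ≤ d → 1 ≤ k →
    ∀ p : (Fin k → Fin d) → ℝ, (∀ f, 0 ≤ p f) → (∑ f, p f = 1) →
      (∫ g : (Fin k → Fin d) → ℝ,
          sSup ((fun h => ∑ f, g f * (Real.sqrt (p f) * h f)) '' L0set d k)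
          ∂(Measure.pi fun _ : Fin k → Fin d => gaussianReal 0 1)) ≤
        C * (d : ℝ) ^ (((k - k / 2 : ℕ) : ℝ) / 2) := by
  refine ⟨2, by norm_num, ?_⟩
  intro d k hd hk p hp0 hp1
  set m : ℕ := k - k / 2 with hm
  have hm1 : 1 ≤ m := by omega
  -- index type of extreme points
  let A := (Fin (k / 2) → Fin d) → Bool
  let B := (Fin m → Fin d) → Bool
  let ι := A × B
  have : Nonempty ι := inferInstance
  let v : ι → (Fin k → Fin d) → ℝ := fun i f => sg (i.1 (tupHead f)) * sg (i.2 (tupTail f))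
  let c : ι → (Fin k → Fin d) → ℝ := fun i f => Real.sqrt (p f) * v i f
  have hvsq : ∀ i f, (v i f) ^ 2 = 1 := by
    intro i f
    show (sg (i.1 (tupHead f)) * sg (i.2 (tupTail f))) ^ 2 = 1
    rw [mul_pow, sg_sq, sg_sq, mul_one]
  have hc : ∀ i, ∑ f, (c i f) ^ 2 = 1 := by
    intro i
    have : ∀ f, (c i f) ^ 2 = p f := by
      intro f
      show (Real.sqrt (p f) * v i f) ^ 2 = p f
      rw [mul_pow, Real.sq_sqrt (hp0 f), hvsq, mul_one]
    rw [Finset.sum_congr rfl fun f _ => this f, hp1]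
  -- the generating set is the range of v
  have hrange : {x : (Fin k → Fin d) → ℝ |
      ∃ w : (Fin (k / 2) → Fin d) → ℝ, ∃ z : (Fin m → Fin d) → ℝ,
      (∀ s, w s = 1 ∨ w s = -1) ∧ (∀ t, z t = 1 ∨ z t = -1) ∧
      x = fun f => w (tupHead f) * z (tupTail f)} = Set.range v := by
    ext x
    constructor
    · rintro ⟨w, z, hw, hz, rfl⟩
      refine ⟨(fun s => decide (w s = 1), fun t => decide (z t = 1)), ?_⟩
      funext f
      show sg (decide (w (tupHead f) = 1)) * sg (decide (z (tupTail f) = 1)) = _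
      rw [sg_of _ (hw _), sg_of _ (hz _)]
    · rintro ⟨i, rfl⟩
      exact ⟨fun s => sg (i.1 s), fun t => sg (i.2 t), fun s => sg_mem _, fun t => sg_mem _, rfl⟩
  -- pointwise identification of the sup
  have key : ∀ g : (Fin k → Fin d) → ℝ,
      sSup ((fun h => ∑ f, g f * (Real.sqrt (p f) * h f)) '' L0set d k)
      = Finset.univ.sup' Finset.univ_nonempty (fun i : ι => ∑ f, c i f * g f) := by
    intro g
    have hlin : IsLinearMap ℝ (fun h : (Fin k → Fin d) → ℝ => ∑ f, g f * (Real.sqrt (p f) * h f)) := by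
      constructor
      · intro x y
        rw [← Finset.sum_add_distrib]
        exact Finset.sum_congr rfl fun f _ => by simp only [Pi.add_apply]; ring
      · intro r x
        simp only [smul_eq_mul, Finset.mul_sum]
        exact Finset.sum_congr rfl fun f _ => by simp only [Pi.smul_apply, smul_eq_mul]; ring
    have himg : (fun h => ∑ f, g f * (Real.sqrt (p f) * h f)) '' L0set d k
        = convexHull ℝ (Set.range fun i : ι => ∑ f, c i f * g f) := by
      have hcomp : ((fun h : (Fin k → Fin d) → ℝ => ∑ f, g f * (Real.sqrt (p f) * h f)) ∘ v)
          = fun i : ι => ∑ f, c i f * g f := by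
        funext i
        show ∑ f, g f * (Real.sqrt (p f) * v i f) = ∑ f, c i f * g f
        exact Finset.sum_congr rfl fun f _ => by
          show _ = Real.sqrt (p f) * v i f * g f; ring
      rw [L0set, hlin.image_convexHull, hrange, ← Set.range_comp, hcomp]
    rw [himg]
    apply IsGreatest.csSup_eq
    constructor
    · obtain ⟨i0, -, hi0⟩ := Finset.exists_mem_eq_sup' Finset.univ_nonempty
        (fun i : ι => ∑ f, c i f * g f)
      rw [hi0]
      exact subset_convexHull ℝ _ ⟨i0, rfl⟩
    · intro y hy
      have hsub : convexHull ℝ (Set.range fun i : ι => ∑ f, c i f * g f)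
          ⊆ Set.Iic (Finset.univ.sup' Finset.univ_nonempty (fun i : ι => ∑ f, c i f * g f)) := by
        apply convexHull_min _ (convex_Iic _)
        rintro _ ⟨i, rfl⟩
        exact Set.mem_Iic.mpr (Finset.le_sup' (fun i : ι => ∑ f, c i f * g f) (Finset.mem_univ i))
      exact hsub hy
  rw [integral_congr_ae (Filter.Eventually.of_forall key)]
  -- cardinality
  have hcard : Fintype.card ι = 2 ^ (d ^ (k / 2) + d ^ m) := by
    show Fintype.card (A × B) = _
    rw [Fintype.card_prod,
      show Fintype.card A = 2 ^ (d ^ (k / 2)) from by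
        simp [A, Fintype.card_fun],
      show Fintype.card B = 2 ^ (d ^ m) from by
        simp [B, Fintype.card_fun],
      ← pow_add]
  have hdm1 : 1 ≤ d ^ m := Nat.one_le_pow _ _ hd
  have hN : 2 ≤ Fintype.card ι := by
    rw [hcard]
    calc 2 = 2 ^ 1 := by norm_num
      _ ≤ 2 ^ (d ^ (k/2) + d ^ m) := Nat.pow_le_pow_right (by norm_num) (by omega)
  have hbound := emax_le c hc hN
  refine hbound.trans ?_
  -- numeric estimate
  have hlog2 : Real.log 2 ≤ 1 := by
    have := Real.log_le_sub_one_of_pos (by norm_num : (0:ℝ) < 2)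
    linarith
  have hlog2' : 0 ≤ Real.log 2 := Real.log_nonneg (by norm_num)
  have hsle : (d : ℝ) ^ (k / 2) ≤ (d : ℝ) ^ m := by
    exact_mod_cast Nat.pow_le_pow_right hd (by omega : k / 2 ≤ m)
  have hdm0 : (0:ℝ) ≤ (d : ℝ) ^ m := by positivity
  have hlogN : Real.log (Fintype.card ι) = ((d ^ (k/2) + d ^ m : ℕ) : ℝ) * Real.log 2 := by
    rw [hcard,
      show ((2 ^ (d ^ (k / 2) + d ^ m) : ℕ) : ℝ) = (2:ℝ) ^ (d ^ (k / 2) + d ^ m) by push_cast; ring,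
      Real.log_pow]
  have h1 : 2 * Real.log (Fintype.card ι) ≤ 4 * (d : ℝ) ^ m := by
    rw [hlogN]
    push_cast
    nlinarith [hsle, hdm0, hlog2, hlog2']
  calc Real.sqrt (2 * Real.log (Fintype.card ι)) ≤ Real.sqrt (4 * (d : ℝ) ^ m) :=
        Real.sqrt_le_sqrt h1
    _ = 2 * Real.sqrt ((d : ℝ) ^ m) := by
        rw [Real.sqrt_mul (by norm_num : (0:ℝ) ≤ 4), show (4:ℝ) = 2 ^ 2 by norm_num,
          Real.sqrt_sq (by norm_num : (0:ℝ) ≤ 2)]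
    _ = 2 * (d : ℝ) ^ (((m : ℕ) : ℝ) / 2) := by
        congr 1
        rw [show ((m : ℕ) : ℝ) / 2 = ((m : ℕ) : ℝ) * (1 / 2) by ring,
          Real.rpow_mul (by positivity), Real.rpow_natCast,
          ← Real.sqrt_eq_rpow]
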